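/- Let m ≥ 1, and for each i ∈ {1, …, m} let s_i : ℝ → ℝ be continuous and strictly increasing on [1, ∞) with s_i(u) > 0 for all u ≥ 1; let λ_i, c_i, x_i > 0, set λ := Σ_{i=1}^m λ_i, and let n > 0. Suppose k = (k_1, …, k_m) with each k_i ≥ 1 satisfies Σ_{i=1}^m λ_i·x_i·k_i/s_i(k_i) < n (strict inequality). Then k is not optimal for the Relaxed optimization: there exists k' = (k'_1, …, k'_m) with each k'_i ≥ 1, Σ_{i=1}^m λ_i·x_i·k'_i/s_i(k'_i) ≤ n, and Σ_{i=1}^m (λ_i/λ)·c_i·x_i/s_i(k'_i) < Σ_{i=1}^m (λ_i/λ)·c_i·x_i/s_i(k_i). Consequently, every optimal solution satisfies Σ_{i=1}^m λ_i·x_i·k_i/s_i(k_i) = n. -/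

import Mathlib

lemma better_exists (m : ℕ) (hm : 1 ≤ m) (s : Fin m → ℝ → ℝ)
    (hmono : ∀ i, StrictMonoOn (s i) (Set.Ici (1 : ℝ)))
    (hpos : ∀ i, ∀ u ≥ (1 : ℝ), 0 < s i u)
    (lam c x : Fin m → ℝ)
    (hlam : ∀ i, 0 < lam i) (hc : ∀ i, 0 < c i) (hx : ∀ i, 0 < x i)
    (n : ℝ)
    (k : Fin m → ℝ) (hk : ∀ i, 1 ≤ k i)
    (hslack : ∑ i, lam i * x i * k i / s i (k i) < n) :
    ∃ k' : Fin m → ℝ, (∀ i, 1 ≤ k' i) ∧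
      (∑ i, lam i * x i * k' i / s i (k' i)) ≤ n ∧
      ∑ i, lam i / (∑ j, lam j) * (c i * x i / s i (k' i)) <
        ∑ i, lam i / (∑ j, lam j) * (c i * x i / s i (k i)) := by
  set i0 : Fin m := ⟨0, hm⟩
  set S : ℝ := ∑ i, lam i * x i * k i / s i (k i) with hS
  have hs0 : 0 < s i0 (k i0) := hpos i0 _ (hk i0)
  have hεpos : 0 < (n - S) * s i0 (k i0) / (lam i0 * x i0) :=
    div_pos (mul_pos (by linarith) hs0) (mul_pos (hlam i0) (hx i0))
  set ε : ℝ := (n - S) * s i0 (k i0) / (lam i0 * x i0) with hε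
  set k' : Fin m → ℝ := Function.update k i0 (k i0 + ε) with hk'
  have hk'ge : ∀ i, 1 ≤ k' i := by
    intro i
    by_cases h : i = i0
    · subst h; rw [hk', Function.update_self]; linarith [hk i0]
    · rw [hk', Function.update_of_ne h]; exact hk i
  have hk'0 : k' i0 = k i0 + ε := by rw [hk', Function.update_self]
  have hslt : s i0 (k i0) < s i0 (k' i0) := by
    rw [hk'0]
    exact hmono i0 (hk i0) (by simp only [Set.mem_Ici]; linarith [hk i0]) (by linarith)
  have hs0' : 0 < s i0 (k' i0) := hpos i0 _ (hk'ge i0)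
  have hsum : ∀ (G : Fin m → ℝ → ℝ) (κ : Fin m → ℝ),
      ∑ i, G i (κ i) = G i0 (κ i0) + ∑ i ∈ Finset.univ.erase i0, G i (κ i) := by
    intro G κ
    rw [Finset.add_sum_erase _ (fun i => G i (κ i)) (Finset.mem_univ i0)]
  have hrest : ∀ (G : Fin m → ℝ → ℝ),
      ∑ i ∈ Finset.univ.erase i0, G i (k' i) = ∑ i ∈ Finset.univ.erase i0, G i (k i) := by
    intro G
    refine Finset.sum_congr rfl (fun j hj => ?_)
    rw [hk', Function.update_of_ne (Finset.ne_of_mem_erase hj)]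
  refine ⟨k', hk'ge, ?_, ?_⟩
  · -- constraint
    have key : lam i0 * x i0 * k' i0 / s i0 (k' i0) ≤ lam i0 * x i0 * k i0 / s i0 (k i0) + (n - S) := by
      have h1 : lam i0 * x i0 * k' i0 / s i0 (k' i0) ≤ lam i0 * x i0 * k' i0 / s i0 (k i0) := by
        apply div_le_div_of_nonneg_left _ hs0 (le_of_lt hslt)
        have h0 : (0:ℝ) ≤ k' i0 := le_trans zero_le_one (hk'ge i0)
        have := hlam i0; have := hx i0; positivity
      have h2 : lam i0 * x i0 * k' i0 / s i0 (k i0)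
          = lam i0 * x i0 * k i0 / s i0 (k i0) + (n - S) := by
        rw [hk'0, hε]
        field_simp [ne_of_gt (hlam i0), ne_of_gt (hx i0)]
      linarith
    calc ∑ i, lam i * x i * k' i / s i (k' i)
        = lam i0 * x i0 * k' i0 / s i0 (k' i0)
            + ∑ i ∈ Finset.univ.erase i0, lam i * x i * k i / s i (k i) := by
          rw [hsum (fun i u => lam i * x i * u / s i u) k',
            hrest (fun i u => lam i * x i * u / s i u)]
      _ ≤ lam i0 * x i0 * k i0 / s i0 (k i0) + (n - S)
            + ∑ i ∈ Finset.univ.erase i0, lam i * x i * k i / s i (k i) := by linarith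
      _ = S + (n - S) := by
          rw [hS, hsum (fun i u => lam i * x i * u / s i u) k]; ring
      _ = n := by ring
  · -- objective strictly decreases
    have hL : 0 < ∑ j, lam j := Finset.sum_pos (fun j _ => hlam j) ⟨i0, Finset.mem_univ i0⟩
    have hterm : lam i0 / (∑ j, lam j) * (c i0 * x i0 / s i0 (k' i0))
        < lam i0 / (∑ j, lam j) * (c i0 * x i0 / s i0 (k i0)) := by
      apply mul_lt_mul_of_pos_left _ (div_pos (hlam i0) hL)
      apply div_lt_div_of_pos_left (mul_pos (hc i0) (hx i0)) hs0 hslt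
    rw [hsum (fun i u => lam i / (∑ j, lam j) * (c i * x i / s i u)) k',
      hsum (fun i u => lam i / (∑ j, lam j) * (c i * x i / s i u)) k,
      hrest (fun i u => lam i / (∑ j, lam j) * (c i * x i / s i u))]
    exact add_lt_add_left hterm _

/-- If the resource constraint is slack at a feasible point `k`, then `k` is not
optimal for the Relaxed problem: a strictly better feasible `k'` exists.
Consequently, every optimal solution has a tight resource constraint. -/
theorem stmt_10 (m : ℕ) (hm : 1 ≤ m) (s : Fin m → ℝ → ℝ)
    (hcont : ∀ i, ContinuousOn (s i) (Set.Ici (1 : ℝ)))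
    (hmono : ∀ i, StrictMonoOn (s i) (Set.Ici (1 : ℝ)))
    (hpos : ∀ i, ∀ u ≥ (1 : ℝ), 0 < s i u)
    (lam c x : Fin m → ℝ)
    (hlam : ∀ i, 0 < lam i) (hc : ∀ i, 0 < c i) (hx : ∀ i, 0 < x i)
    (n : ℝ) (hn : 0 < n)
    (k : Fin m → ℝ) (hk : ∀ i, 1 ≤ k i)
    (hslack : ∑ i, lam i * x i * k i / s i (k i) < n) :
    (∃ k' : Fin m → ℝ, (∀ i, 1 ≤ k' i) ∧
      (∑ i, lam i * x i * k' i / s i (k' i)) ≤ n ∧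
      ∑ i, lam i / (∑ j, lam j) * (c i * x i / s i (k' i)) <
        ∑ i, lam i / (∑ j, lam j) * (c i * x i / s i (k i))) ∧
    (∀ kopt : Fin m → ℝ, (∀ i, 1 ≤ kopt i) →
      (∑ i, lam i * x i * kopt i / s i (kopt i)) ≤ n →
      (∀ k'' : Fin m → ℝ, (∀ i, 1 ≤ k'' i) →
        (∑ i, lam i * x i * k'' i / s i (k'' i)) ≤ n →
        ∑ i, lam i / (∑ j, lam j) * (c i * x i / s i (kopt i)) ≤
          ∑ i, lam i / (∑ j, lam j) * (c i * x i / s i (k'' i))) →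
      ∑ i, lam i * x i * kopt i / s i (kopt i) = n) := by
  constructor
  · exact better_exists m hm s hmono hpos lam c x hlam hc hx n k hk hslack
  · intro kopt hkopt hfeas hopt
    by_contra hne
    have hlt : ∑ i, lam i * x i * kopt i / s i (kopt i) < n := lt_of_le_of_ne hfeas hne
    obtain ⟨k', h1, h2, h3⟩ :=
      better_exists m hm s hmono hpos lam c x hlam hc hx n kopt hkopt hlt
    exact absurd (hopt k' h1 h2) (not_le.mpr h3)
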